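/- arXiv:1409.6705 — 4 statements merged into one kernel-verified Lean document; each statement's English description precedes it below -/
import Mathlib

section
/- Let X be a Banach space, let c > 0, and let T : X → X be a map with T(0) = 0 satisfying ‖T x − T y‖ ≤ c(‖x‖ + ‖y‖)‖x − y‖ for all x, y ∈ X. Then for every y ∈ X with ‖y‖ ≤ 1/(10c) there exists a unique x ∈ X with ‖x‖ ≤ 1/(5c) solving x + T x = y; moreover this solution satisfies ‖x‖ ≤ 2‖y‖. -/
/-- Banach fixed-point lemma, Donaldson–Kronheimer Lemma 7.2.23.
If `X` is a Banach space, `T : X → X` satisfies `T 0 = 0` and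
`‖Tx − Ty‖ ≤ c(‖x‖ + ‖y‖)‖x − y‖`, then for every `y` with `‖y‖ ≤ 1/(10c)` there is a
unique `x` with `‖x‖ ≤ 1/(5c)` solving `x + Tx = y`, and it satisfies `‖x‖ ≤ 2‖y‖`. -/
theorem statement5 {X : Type*} [NormedAddCommGroup X] [NormedSpace ℝ X] [CompleteSpace X]
    (c : ℝ) (hc : 0 < c) (T : X → X) (hT0 : T 0 = 0)
    (hT : ∀ x y : X, ‖T x - T y‖ ≤ c * (‖x‖ + ‖y‖) * ‖x - y‖)
    (y : X) (hy : ‖y‖ ≤ 1 / (10 * c)) :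
    ∃ x : X, (‖x‖ ≤ 1 / (5 * c) ∧ x + T x = y ∧ ‖x‖ ≤ 2 * ‖y‖) ∧
      ∀ x' : X, ‖x'‖ ≤ 1 / (5 * c) → x' + T x' = y → x' = x := by
  have hy0 : (0:ℝ) ≤ ‖y‖ := norm_nonneg y
  set r : ℝ := 2 * ‖y‖ with hrdef
  have hr0 : 0 ≤ r := by positivity
  have hr5 : r ≤ 1 / (5 * c) := by
    have h2 : (2:ℝ) * (1 / (10 * c)) = 1 / (5 * c) := by field_simp; ring
    nlinarith
  -- key contraction estimate on the small ball (radius 1/(5c))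
  have hcontr : ∀ a b : X, ‖a‖ ≤ 1 / (5 * c) → ‖b‖ ≤ 1 / (5 * c) →
      ‖T a - T b‖ ≤ (2/5) * ‖a - b‖ := by
    intro a b ha5 hb5
    have h1 := hT a b
    have hk : c * (‖a‖ + ‖b‖) ≤ 2/5 := by
      have h3 : c * (‖a‖ + ‖b‖) ≤ c * (2 * (1 / (5 * c))) := by nlinarith
      have hcc : c * (2 * (1 / (5 * c))) = 2/5 := by field_simp
      linarith
    nlinarith [norm_nonneg (a - b)]
  -- T bound on the ball of radius r
  have hTbound : ∀ a : X, ‖a‖ ≤ r → ‖T a‖ ≤ 2 * ‖y‖ / 5 := by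
    intro a ha
    have h1 : ‖T a - T 0‖ ≤ c * (‖a‖ + ‖(0:X)‖) * ‖a - 0‖ := hT a 0
    simp [hT0] at h1
    have ha5 : ‖a‖ ≤ 1 / (5 * c) := le_trans ha hr5
    have h2 : c * ‖a‖ * ‖a‖ ≤ c * (1 / (5 * c)) * ‖a‖ := by
      nlinarith [mul_le_mul_of_nonneg_left ha5 (mul_nonneg hc.le (norm_nonneg a))]
    have hcc : c * (1 / (5 * c)) = 1 / 5 := by field_simp
    calc ‖T a‖ ≤ c * ‖a‖ * ‖a‖ := h1
      _ ≤ c * (1 / (5 * c)) * ‖a‖ := h2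
      _ = ‖a‖ / 5 := by rw [hcc]; ring
      _ ≤ r / 5 := by linarith
      _ = 2 * ‖y‖ / 5 := by rw [hrdef]
  -- set up the map on the closed ball
  set s : Set X := Metric.closedBall (0:X) r with hsdef
  have hmem : ∀ a : X, a ∈ s ↔ ‖a‖ ≤ r := by
    intro a; simp [hsdef, Metric.mem_closedBall, dist_zero_right]
  have hsc : IsClosed s := Metric.isClosed_closedBall
  haveI : CompleteSpace s := hsc.completeSpace_coe
  have h0s : (0:X) ∈ s := by rw [hmem]; simpa using hr0
  haveI : Nonempty s := ⟨⟨0, h0s⟩⟩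
  have hmaps : ∀ a : s, y - T (a : X) ∈ s := by
    intro a
    have ha : ‖(a : X)‖ ≤ r := (hmem _).1 a.2
    rw [hmem]
    have := hTbound a ha
    calc ‖y - T (a:X)‖ ≤ ‖y‖ + ‖T (a:X)‖ := norm_sub_le _ _
      _ ≤ ‖y‖ + 2 * ‖y‖ / 5 := by linarith
      _ ≤ r := by rw [hrdef]; linarith
  set F : s → s := fun a => ⟨y - T a, hmaps a⟩ with hFdef
  have hF : ContractingWith (⟨2/5, by norm_num⟩ : NNReal) F := by
    constructor
    · exact_mod_cast (by norm_num : (2:ℝ)/5 < 1)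
    · apply LipschitzWith.of_dist_le_mul
      intro a b
      have ha : ‖(a : X)‖ ≤ 1 / (5 * c) := le_trans ((hmem _).1 a.2) hr5
      have hb : ‖(b : X)‖ ≤ 1 / (5 * c) := le_trans ((hmem _).1 b.2) hr5
      have h1 := hcontr (a : X) (b : X) ha hb
      have hd : dist (F a) (F b) = ‖T (b : X) - T (a : X)‖ := by
        rw [Subtype.dist_eq, hFdef]
        simp [dist_eq_norm]
      have hd2 : dist a b = ‖(a : X) - (b : X)‖ := by
        rw [Subtype.dist_eq, dist_eq_norm]
      rw [hd, hd2, ← norm_neg (T (b:X) - T (a:X))]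
      rw [neg_sub]; exact h1
  set x0 : s := hF.fixedPoint F with hx0def
  have hfix : F x0 = x0 := hF.fixedPoint_isFixedPt
  set x : X := (x0 : X) with hxdef
  have hxr : ‖x‖ ≤ r := (hmem _).1 x0.2
  have heq : y - T x = x := by
    have := congrArg (Subtype.val) hfix
    simpa [hFdef, hxdef] using this
  have hsolve : x + T x = y := by
    have : x + T x = (y - T x) + T x := by rw [heq]
    rw [this]; abel
  refine ⟨x, ⟨le_trans hxr hr5, hsolve, hxr⟩, ?_⟩
  intro x' hx'5 hx'eq
  have hx5 : ‖x‖ ≤ 1 / (5 * c) := le_trans hxr hr5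
  have hdiff : x' - x = T x - T x' := by
    have h1 : x' + T x' = x + T x := by rw [hx'eq, hsolve]
    have : x' - x = (x + T x) - T x' - x := by rw [← h1]; abel
    rw [this]; abel
  have hb := hcontr x x' hx5 hx'5
  have hnn : ‖x' - x‖ = ‖T x - T x'‖ := by rw [hdiff]
  have hsym : ‖x - x'‖ = ‖x' - x‖ := norm_sub_rev _ _
  have : ‖x' - x‖ ≤ (2/5) * ‖x' - x‖ := by
    calc ‖x' - x‖ = ‖T x - T x'‖ := hnn
      _ ≤ (2/5) * ‖x - x'‖ := hb
      _ = (2/5) * ‖x' - x‖ := by rw [hsym]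
  have h0 : ‖x' - x‖ ≤ 0 := by linarith
  have := norm_nonneg (x' - x)
  have : ‖x' - x‖ = 0 := le_antisymm h0 this
  have := norm_eq_zero.mp this
  exact sub_eq_zero.mp this
end

section
/- For every ℓ ∈ ℝ and δ ≤ 0 there exists a constant c > 0, depending only on ℓ and δ, such that for all λ ∈ (0,1], all N ≥ 1, and all x ∈ X with r(x) ≤ N·√λ: c⁻¹ · w_{ℓ,δ;λ}(x) ≤ λ^{−ℓ} · (1 + r(x)/λ)^{−ℓ−δ} ≤ c · N^{−2δ} · w_{ℓ,δ;λ}(x). (This is the weight-function content of the comparison between the weighted norms on X near Q and the λ-rescaled weighted norms on the model ℝ⁴ × ℝ⁴.) -/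
open scoped BigOperators ENNReal

noncomputable section

/-- The weight function `w_{ℓ,δ;λ}` associated with the subset `Q ⊆ X`:
`w_{ℓ,δ;λ}(x) = λ^δ (λ + r(x))^{−ℓ−δ}` if `r(x) ≤ √λ` and `r(x)^{−ℓ+δ}` otherwise,
where `r(x) = dist(x, Q)`. -/
def wt {X : Type*} [MetricSpace X] (Q : Set X) (l d lam : ℝ) (x : X) : ℝ :=
  if Metric.infDist x Q ≤ Real.sqrt lam then
    lam ^ d * (lam + Metric.infDist x Q) ^ (-l - d)
  else (Metric.infDist x Q) ^ (-l + d)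

/-- The weighted sup-norm `‖f‖_{L∞_{ℓ,δ;λ}} = sup_x w_{ℓ,δ;λ}(x)‖f(x)‖`, valued in `[0,∞]`. -/
def wnorm {X : Type*} [MetricSpace X] (Q : Set X) (l d lam : ℝ)
    {E : Type*} [NormedAddCommGroup E] (f : X → E) : ℝ≥0∞ :=
  ⨆ x : X, ENNReal.ofReal (wt Q l d lam x * ‖f x‖)

/-- The weighted Hölder seminorm `[f]_{C^{0,α}_{ℓ,δ;λ}}`, the supremum of
`w_{ℓ−α,δ;λ}(x,y)‖f(x) − f(y)‖/d(x,y)^α` over pairs `x ≠ y` with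
`d(x,y) ≤ λ + min(r(x), r(y))`, valued in `[0,∞]`. -/
def wseminorm {X : Type*} [MetricSpace X] (Q : Set X) (l d lam a : ℝ)
    {E : Type*} [NormedAddCommGroup E] (f : X → E) : ℝ≥0∞ :=
  ⨆ p : {p : X × X // p.1 ≠ p.2 ∧
      dist p.1 p.2 ≤ lam + min (Metric.infDist p.1 Q) (Metric.infDist p.2 Q)},
    ENNReal.ofReal
      (min (wt Q (l - a) d lam p.1.1) (wt Q (l - a) d lam p.1.2) *
        ‖f p.1.1 - f p.1.2‖ / dist p.1.1 p.1.2 ^ a)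

/-- The weighted Hölder norm `‖f‖_{C^{0,α}_{ℓ,δ;λ}} = ‖f‖_{L∞_{ℓ,δ;λ}} + [f]_{C^{0,α}_{ℓ,δ;λ}}`. -/
def wCnorm {X : Type*} [MetricSpace X] (Q : Set X) (l d lam a : ℝ)
    {E : Type*} [NormedAddCommGroup E] (f : X → E) : ℝ≥0∞ :=
  wnorm Q l d lam f + wseminorm Q l d lam a f

lemma two_rpow_bounds (t e : ℝ) (h1 : 1 ≤ t) (h2 : t ≤ 2) :
    (2:ℝ) ^ (-|e|) ≤ t ^ e ∧ t ^ e ≤ 2 ^ |e| := by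
  rcases le_or_gt 0 e with he | he
  · rw [abs_of_nonneg he]
    constructor
    · calc (2:ℝ) ^ (-e) ≤ 1 := Real.rpow_le_one_of_one_le_of_nonpos (by norm_num) (by linarith)
        _ = (1:ℝ) ^ e := (Real.one_rpow e).symm
        _ ≤ t ^ e := Real.rpow_le_rpow zero_le_one h1 he
    · exact Real.rpow_le_rpow (by linarith) h2 he
  · rw [abs_of_neg he]
    constructor
    · rw [neg_neg]
      exact Real.rpow_le_rpow_of_nonpos (by linarith) h2 he.le
    · calc t ^ e ≤ 1 ^ e := Real.rpow_le_rpow_of_nonpos (by linarith) h1 he.le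
        _ = 1 := Real.one_rpow e
        _ ≤ 2 ^ (-e) := Real.one_le_rpow one_le_two (by linarith)

/-- For `ℓ ∈ ℝ` and `δ ≤ 0` there is `c > 0`, depending only on `ℓ, δ`,
such that for all `λ ∈ (0,1]`, `N ≥ 1` and `x` with `r(x) ≤ N√λ`,
`c⁻¹ w_{ℓ,δ;λ}(x) ≤ λ^{−ℓ}(1 + r(x)/λ)^{−ℓ−δ} ≤ c N^{−2δ} w_{ℓ,δ;λ}(x)`. -/
theorem statement10 {X : Type*} [MetricSpace X] (Q : Set X) (hQ : Q.Nonempty)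
    (l d : ℝ) (hd : d ≤ 0) :
    ∃ c : ℝ, 0 < c ∧ ∀ lam : ℝ, 0 < lam → lam ≤ 1 → ∀ N : ℝ, 1 ≤ N → ∀ x : X,
      Metric.infDist x Q ≤ N * Real.sqrt lam →
        c⁻¹ * wt Q l d lam x ≤
            lam ^ (-l) * (1 + Metric.infDist x Q / lam) ^ (-l - d) ∧
          lam ^ (-l) * (1 + Metric.infDist x Q / lam) ^ (-l - d) ≤
            c * N ^ (-(2 * d)) * wt Q l d lam x := by
  set e := -l - d with he_def
  refine ⟨2 ^ |e|, Real.rpow_pos_of_pos two_pos _, ?_⟩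
  have hc1 : (1:ℝ) ≤ 2 ^ |e| := Real.one_le_rpow one_le_two (abs_nonneg e)
  have hc0 : (0:ℝ) < 2 ^ |e| := Real.rpow_pos_of_pos two_pos _
  intro lam hlam hlam1 N hN x hx
  set r := Metric.infDist x Q with hr_def
  have hr0 : 0 ≤ r := Metric.infDist_nonneg
  -- middle = lam^d * (lam+r)^e
  have hM : lam ^ (-l) * (1 + r / lam) ^ e = lam ^ d * (lam + r) ^ e := by
    have h1 : 1 + r / lam = (lam + r) / lam := by field_simp
    rw [h1, Real.div_rpow (by linarith) hlam.le]
    calc lam ^ (-l) * ((lam + r) ^ e / lam ^ e)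
        = lam ^ (-l) / lam ^ e * (lam + r) ^ e := by ring
      _ = lam ^ (-l - e) * (lam + r) ^ e := by rw [← Real.rpow_sub hlam]
      _ = lam ^ d * (lam + r) ^ e := by rw [show -l - e = d by rw [he_def]; ring]
  have hN0 : (0 < N) := lt_of_lt_of_le one_pos hN
  have hN2d : (1:ℝ) ≤ N ^ (-(2*d)) := Real.one_le_rpow hN (by linarith)
  rw [hM]
  by_cases h : r ≤ Real.sqrt lam
  · -- wt equals the middle expression
    have hw : wt Q l d lam x = lam ^ d * (lam + r) ^ e := by
      rw [wt, if_pos h]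
    rw [hw]
    have hwpos : 0 ≤ lam ^ d * (lam + r) ^ e := by positivity
    constructor
    · calc (2 ^ |e|)⁻¹ * (lam ^ d * (lam + r) ^ e) ≤ 1 * (lam ^ d * (lam + r) ^ e) := by
            apply mul_le_mul_of_nonneg_right _ hwpos
            rw [inv_le_one_iff₀]; right; exact hc1
        _ = lam ^ d * (lam + r) ^ e := one_mul _
    · calc lam ^ d * (lam + r) ^ e = 1 * (lam ^ d * (lam + r) ^ e) := (one_mul _).symm
        _ ≤ 2 ^ |e| * N ^ (-(2*d)) * (lam ^ d * (lam + r) ^ e) := by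
            apply mul_le_mul_of_nonneg_right _ hwpos
            calc (1:ℝ) = 1 * 1 := (one_mul 1).symm
              _ ≤ 2 ^ |e| * N ^ (-(2*d)) := mul_le_mul hc1 hN2d zero_le_one hc0.le
  · push_neg at h
    have hsq : 0 < Real.sqrt lam := Real.sqrt_pos.2 hlam
    have hrpos : 0 < r := lt_trans hsq h
    have hw : wt Q l d lam x = r ^ (-l + d) := by
      rw [wt, if_neg (not_le.2 h)]
    rw [hw]
    have hlr2 : lam < r ^ 2 := by
      have := Real.sq_sqrt hlam.le
      nlinarith
    have hrN2 : r ^ 2 ≤ N ^ 2 * lam := by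
      have h2 : r ^ 2 ≤ (N * Real.sqrt lam) ^ 2 := by nlinarith
      have := Real.sq_sqrt hlam.le
      nlinarith
    have hlamr : lam < r := by nlinarith
    -- t := (lam + r)/r ∈ (1, 2]
    set t := (lam + r) / r with ht_def
    have ht1 : 1 ≤ t := by rw [ht_def, le_div_iff₀ hrpos]; linarith
    have ht2 : t ≤ 2 := by rw [ht_def, div_le_iff₀ hrpos]; linarith
    obtain ⟨htl, htu⟩ := two_rpow_bounds t e ht1 ht2
    -- key factorization: lam^d*(lam+r)^e = r^(-l+d) * (lam^d * r^(-(2*d))) * t^e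
    have hfact : lam ^ d * (lam + r) ^ e
        = r ^ (-l + d) * (lam ^ d * r ^ (-(2*d))) * t ^ e := by
      have h1 : lam + r = r * t := by
        rw [ht_def]; field_simp
      rw [h1, Real.mul_rpow hr0 (by positivity)]
      rw [show r ^ (-l + d) * (lam ^ d * r ^ (-(2*d))) * t ^ e
          = lam ^ d * (r ^ (-l + d) * r ^ (-(2*d))) * t ^ e by ring,
        ← Real.rpow_add hrpos]
      ring_nf
      rw [he_def]; ring
    rw [hfact]
    -- bounds on the middle factor
    have hA : 1 ≤ lam ^ d * r ^ (-(2*d)) := by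
      have h1 : (r ^ 2) ^ d ≤ lam ^ d :=
        Real.rpow_le_rpow_of_nonpos hlam hlr2.le hd
      have h2 : (r ^ 2) ^ d = r ^ (2 * d) := by
        rw [← Real.rpow_natCast r 2, ← Real.rpow_mul hr0]
        norm_num
      have h3 : r ^ (2*d) * r ^ (-(2*d)) = 1 := by
        rw [← Real.rpow_add hrpos]; simp
      calc (1:ℝ) = r ^ (2*d) * r ^ (-(2*d)) := h3.symm
        _ ≤ lam ^ d * r ^ (-(2*d)) := by
            apply mul_le_mul_of_nonneg_right _ (by positivity)
            rw [← h2]; exact h1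
    have hB : lam ^ d * r ^ (-(2*d)) ≤ N ^ (-(2*d)) := by
      have h1 : (N ^ 2 * lam) ^ d ≤ (r ^ 2) ^ d :=
        Real.rpow_le_rpow_of_nonpos (by positivity) hrN2 hd
      have h2 : (r ^ 2) ^ d = r ^ (2 * d) := by
        rw [← Real.rpow_natCast r 2, ← Real.rpow_mul hr0]; norm_num
      have h3 : (N ^ 2 * lam) ^ d = N ^ (2*d) * lam ^ d := by
        rw [Real.mul_rpow (by positivity) hlam.le, ← Real.rpow_natCast N 2,
          ← Real.rpow_mul hN0.le]
        norm_num
      have key : N ^ (2*d) * lam ^ d ≤ r ^ (2*d) := by rw [← h3, ← h2]; exact h1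
      have hrp : (0:ℝ) < r ^ (2*d) := Real.rpow_pos_of_pos hrpos _
      have hNp : (0:ℝ) < N ^ (2*d) := Real.rpow_pos_of_pos hN0 _
      rw [Real.rpow_neg hr0, Real.rpow_neg hN0.le, ← div_eq_mul_inv,
        div_le_iff₀ hrp]
      calc lam ^ d = (N ^ (2*d))⁻¹ * (N ^ (2*d) * lam ^ d) := by field_simp
        _ ≤ (N ^ (2*d))⁻¹ * r ^ (2*d) :=
            mul_le_mul_of_nonneg_left key (inv_nonneg.2 hNp.le)
    have hrld : (0:ℝ) < r ^ (-l + d) := Real.rpow_pos_of_pos hrpos _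
    constructor
    · calc (2 ^ |e|)⁻¹ * r ^ (-l + d)
          = r ^ (-l + d) * 1 * (2 ^ (-|e|)) := by
            rw [← Real.rpow_neg (by norm_num : (0:ℝ) ≤ 2)]; ring
        _ ≤ r ^ (-l + d) * (lam ^ d * r ^ (-(2*d))) * t ^ e := by
            apply mul_le_mul _ htl (by positivity) (by positivity)
            exact mul_le_mul_of_nonneg_left hA hrld.le
    · calc r ^ (-l + d) * (lam ^ d * r ^ (-(2*d))) * t ^ e
          ≤ r ^ (-l + d) * N ^ (-(2*d)) * 2 ^ |e| := by
            apply mul_le_mul _ htu (Real.rpow_pos_of_pos (by positivity) e).le (by positivity)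
            exact mul_le_mul_of_nonneg_left hB hrld.le
        _ = 2 ^ |e| * N ^ (-(2*d)) * r ^ (-l + d) := by ring
end
end

section
/- Let ℓ ≤ −1 and δ ∈ ℝ satisfy ℓ + δ < −1, and let σ > 0. There exists a constant c > 0 such that for all λ ∈ (0, min{1, σ²}]: ∫₀^{√λ} λ^{2−δ} (λ + r)^{ℓ+δ−3} r³ dr + ∫_{√λ}^{σ} λ² r^{ℓ−δ} (λ + r)^{−3} r³ dr ≤ c · λ^{3+ℓ}. -/
open MeasureTheory

/-- For `ℓ ≤ −1`, `ℓ + δ < −1` and `σ > 0` there is `c > 0` such that for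
all `λ ∈ (0, min{1, σ²}]`:
`∫₀^{√λ} λ^{2−δ}(λ+r)^{ℓ+δ−3} r³ dr + ∫_{√λ}^{σ} λ² r^{ℓ−δ}(λ+r)^{−3} r³ dr ≤ c λ^{3+ℓ}`. -/
theorem statement13 (l d σ : ℝ) (hl : l ≤ -1) (hld : l + d < -1) (hσ : 0 < σ) :
    ∃ c : ℝ, 0 < c ∧ ∀ lam : ℝ, 0 < lam → lam ≤ min 1 (σ ^ 2) →
      (∫ r in (0 : ℝ)..Real.sqrt lam, lam ^ (2 - d) * (lam + r) ^ (l + d - 3) * r ^ 3) +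
          (∫ r in Real.sqrt lam..σ, lam ^ 2 * r ^ (l - d) * (lam + r) ^ (-3 : ℝ) * r ^ 3) ≤
        c * lam ^ (3 + l) := by
  have hp1 : l + d + 1 < 0 := by linarith
  set a : ℝ := max (l - d) (-l - d - 2) with ha_def
  have ha : (-1 : ℝ) < a := lt_of_lt_of_le (by linarith) (le_max_right _ _)
  have ha1 : 0 < a + 1 := by linarith
  have hcpos : 0 < 1 / (-(l + d + 1)) + σ ^ (a + 1) / (a + 1) := by
    have h1 : 0 < 1 / (-(l + d + 1)) := one_div_pos.mpr (by linarith)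
    have h2 : 0 < σ ^ (a + 1) / (a + 1) := div_pos (Real.rpow_pos_of_pos hσ _) ha1
    linarith
  refine ⟨1 / (-(l + d + 1)) + σ ^ (a + 1) / (a + 1), hcpos, ?_⟩
  intro lam hlam hlam2
  have hlam1 : lam ≤ 1 := le_trans hlam2 (min_le_left _ _)
  have hlamσ : lam ≤ σ ^ 2 := le_trans hlam2 (min_le_right _ _)
  have hs : 0 < Real.sqrt lam := Real.sqrt_pos.mpr hlam
  have hsσ : Real.sqrt lam ≤ σ := by
    calc Real.sqrt lam ≤ Real.sqrt (σ ^ 2) := Real.sqrt_le_sqrt hlamσ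
    _ = σ := Real.sqrt_sq hσ.le
  -- first integral
  have int1 : (∫ r in (0 : ℝ)..Real.sqrt lam, lam ^ (2 - d) * (lam + r) ^ (l + d - 3) * r ^ 3)
      ≤ ∫ r in (0 : ℝ)..Real.sqrt lam, lam ^ (2 - d) * (lam + r) ^ (l + d) := by
    apply intervalIntegral.integral_mono_on hs.le
    · apply ContinuousOn.intervalIntegrable
      apply ContinuousOn.mul
      apply continuousOn_const.mul
      · apply ContinuousOn.rpow_const (continuousOn_const.add continuousOn_id)
        intro x hx
        rw [Set.uIcc_of_le hs.le] at hx
        exact Or.inl (by have := hx.1; show lam + x ≠ 0; positivity)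
      · exact (continuous_pow 3).continuousOn
    · apply ContinuousOn.intervalIntegrable
      apply continuousOn_const.mul
      apply ContinuousOn.rpow_const (continuousOn_const.add continuousOn_id)
      intro x hx
      rw [Set.uIcc_of_le hs.le] at hx
      exact Or.inl (by have := hx.1; show lam + x ≠ 0; positivity)
    · intro x hx
      have hx0 : 0 ≤ x := hx.1
      have hlx : 0 < lam + x := by linarith
      have h3 : x ^ 3 ≤ (lam + x) ^ 3 := pow_le_pow_left₀ hx0 (by linarith) 3
      calc lam ^ (2 - d) * (lam + x) ^ (l + d - 3) * x ^ 3
          ≤ lam ^ (2 - d) * (lam + x) ^ (l + d - 3) * (lam + x) ^ 3 := by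
            apply mul_le_mul_of_nonneg_left h3
            positivity
        _ = lam ^ (2 - d) * (lam + x) ^ (l + d) := by
            rw [mul_assoc, ← Real.rpow_natCast (lam + x) 3, ← Real.rpow_add hlx]
            norm_num
  have comp1 : (∫ r in (0 : ℝ)..Real.sqrt lam, lam ^ (2 - d) * (lam + r) ^ (l + d))
      ≤ (1 / (-(l + d + 1))) * lam ^ (3 + l) := by
    rw [intervalIntegral.integral_const_mul]
    have hsub : (∫ r in (0 : ℝ)..Real.sqrt lam, (lam + r) ^ (l + d))
        = ∫ u in lam..(lam + Real.sqrt lam), u ^ (l + d) := by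
      have := intervalIntegral.integral_comp_add_left (a := (0 : ℝ)) (b := Real.sqrt lam)
        (fun u => u ^ (l + d)) lam
      simpa using this
    have hnotmem : (0 : ℝ) ∉ Set.uIcc lam (lam + Real.sqrt lam) := by
      rw [Set.uIcc_of_le (by linarith)]
      intro h
      exact absurd h.1 (by linarith)
    rw [hsub, integral_rpow (Or.inr ⟨by linarith, hnotmem⟩)]
    have hA : 0 < lam ^ (2 - d) := Real.rpow_pos_of_pos hlam _
    have hX : (0 : ℝ) ≤ (lam + Real.sqrt lam) ^ (l + d + 1) := Real.rpow_nonneg (by linarith) _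
    have hY : 0 < lam ^ (l + d + 1) := Real.rpow_pos_of_pos hlam _
    have h2 : lam ^ (2 - d) * lam ^ (l + d + 1) = lam ^ (3 + l) := by
      rw [← Real.rpow_add hlam]
      ring_nf
    have hc : 0 < -(l + d + 1) := by linarith
    have key : ((lam + Real.sqrt lam) ^ (l + d + 1) - lam ^ (l + d + 1)) / (l + d + 1)
        = (lam ^ (l + d + 1) - (lam + Real.sqrt lam) ^ (l + d + 1)) / (-(l + d + 1)) := by
      rw [div_neg, ← neg_div, neg_sub]
    calc lam ^ (2 - d) * (((lam + Real.sqrt lam) ^ (l + d + 1) - lam ^ (l + d + 1)) / (l + d + 1))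
        = (lam ^ (2 - d) * (lam ^ (l + d + 1) - (lam + Real.sqrt lam) ^ (l + d + 1)))
            / (-(l + d + 1)) := by rw [key]; ring
      _ ≤ (lam ^ (2 - d) * lam ^ (l + d + 1)) / (-(l + d + 1)) := by
          gcongr
          nlinarith [mul_nonneg hA.le hX]
      _ = (1 / (-(l + d + 1))) * lam ^ (3 + l) := by rw [h2]; ring
  -- second integral
  have hone : (1 : ℝ) ≤ lam ^ (l + 1) :=
    Real.one_le_rpow_of_pos_of_le_one_of_nonpos hlam hlam1 (by linarith)
  have int2 : (∫ r in Real.sqrt lam..σ, lam ^ 2 * r ^ (l - d) * (lam + r) ^ (-3 : ℝ) * r ^ 3)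
      ≤ ∫ r in Real.sqrt lam..σ, lam ^ (3 + l) * r ^ a := by
    apply intervalIntegral.integral_mono_on hsσ
    · apply ContinuousOn.intervalIntegrable
      have hmem : ∀ x ∈ Set.uIcc (Real.sqrt lam) σ, 0 < x := by
        intro x hx
        rw [Set.uIcc_of_le hsσ] at hx
        exact lt_of_lt_of_le hs hx.1
      apply ContinuousOn.mul
      apply ContinuousOn.mul
      · apply continuousOn_const.mul
        exact ContinuousOn.rpow_const continuousOn_id fun x hx => Or.inl (hmem x hx).ne'
      · exact ContinuousOn.rpow_const (continuousOn_const.add continuousOn_id)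
          fun x hx => Or.inl (by have := hmem x hx; positivity)
      · exact (continuous_pow 3).continuousOn
    · apply ContinuousOn.intervalIntegrable
      apply continuousOn_const.mul
      apply ContinuousOn.rpow_const continuousOn_id
      intro x hx
      rw [Set.uIcc_of_le hsσ] at hx
      exact Or.inl (lt_of_lt_of_le hs hx.1).ne'
    · intro x hx
      have hxs : Real.sqrt lam ≤ x := hx.1
      have hx0 : 0 < x := lt_of_lt_of_le hs hxs
      have hlx : 0 < lam + x := by linarith
      have step1 : (lam + x) ^ (-3 : ℝ) ≤ x ^ (-3 : ℝ) :=
        Real.rpow_le_rpow_of_nonpos hx0 (by linarith) (by norm_num)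
      have step2 : x ^ (-3 : ℝ) * (x : ℝ) ^ (3 : ℕ) = 1 := by
        rw [← Real.rpow_natCast x 3, ← Real.rpow_add hx0]
        norm_num
      have step3 : x ^ (l - d) ≤ lam ^ (l + 1) * x ^ a := by
        rcases le_or_gt (-l - d - 2) (l - d) with h | h
        · have haq : a = l - d := max_eq_left h
          rw [haq]
          nth_rewrite 1 [← one_mul (x ^ (l - d))]
          exact mul_le_mul_of_nonneg_right hone (Real.rpow_nonneg hx0.le _)
        · have haq : a = -l - d - 2 := max_eq_right h.le
          have hsplit : x ^ (l - d) = x ^ (l - d - a) * x ^ a := by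
            rw [← Real.rpow_add hx0]
            ring_nf
          rw [hsplit]
          apply mul_le_mul_of_nonneg_right ?_ (Real.rpow_nonneg hx0.le _)
          have hexp : l - d - a = 2 * l + 2 := by rw [haq]; ring
          have hb : x ^ (l - d - a) ≤ (Real.sqrt lam) ^ (l - d - a) := by
            apply Real.rpow_le_rpow_of_nonpos hs hxs
            rw [hexp]; linarith
          have hb2 : (Real.sqrt lam) ^ (l - d - a) = lam ^ (l + 1) := by
            rw [hexp, Real.sqrt_eq_rpow, ← Real.rpow_mul hlam.le]
            congr 1
            ring
          rw [← hb2]; exact hb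
      calc lam ^ 2 * x ^ (l - d) * (lam + x) ^ (-3 : ℝ) * x ^ 3
          = lam ^ 2 * x ^ (l - d) * ((lam + x) ^ (-3 : ℝ) * x ^ 3) := by ring
        _ ≤ lam ^ 2 * x ^ (l - d) * (x ^ (-3 : ℝ) * x ^ 3) := by
            apply mul_le_mul_of_nonneg_left
            · apply mul_le_mul_of_nonneg_right step1 (by positivity)
            · positivity
        _ = lam ^ 2 * x ^ (l - d) := by rw [step2, mul_one]
        _ ≤ lam ^ 2 * (lam ^ (l + 1) * x ^ a) := by
            apply mul_le_mul_of_nonneg_left step3 (by positivity)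
        _ = lam ^ (3 + l) * x ^ a := by
            rw [← Real.rpow_natCast lam 2, ← mul_assoc, ← Real.rpow_add hlam,
              show ((2 : ℕ) : ℝ) + (l + 1) = 3 + l by push_cast; ring]
  have comp2 : (∫ r in Real.sqrt lam..σ, lam ^ (3 + l) * r ^ a)
      ≤ (σ ^ (a + 1) / (a + 1)) * lam ^ (3 + l) := by
    rw [intervalIntegral.integral_const_mul, integral_rpow (Or.inl ha)]
    have hL : 0 < lam ^ (3 + l) := Real.rpow_pos_of_pos hlam _
    have hS : (0 : ℝ) ≤ (Real.sqrt lam) ^ (a + 1) := Real.rpow_nonneg hs.le _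
    rw [mul_comm (σ ^ (a + 1) / (a + 1))]
    apply mul_le_mul_of_nonneg_left ?_ hL.le
    gcongr
    linarith
  calc _ ≤ (1 / (-(l + d + 1))) * lam ^ (3 + l) + (σ ^ (a + 1) / (a + 1)) * lam ^ (3 + l) := by
        have := le_trans int1 comp1
        have := le_trans int2 comp2
        linarith
    _ = (1 / (-(l + d + 1)) + σ ^ (a + 1) / (a + 1)) * lam ^ (3 + l) := by ring
end

section
/- Let χ : ℝ → [0,1] be an L-Lipschitz function with χ(s) = 0 for s ≤ 1 and χ(s) = 1 for s ≥ 2, and fix α ∈ (0,1). Then there exists a constant c > 0, depending only on L and α, such that for every λ ∈ (0,1] the function χ_λ : X → [0,1] defined by χ_λ(x) := χ(r(x)/√λ) satisfies ‖χ_λ‖_{C^{0,α}_{0,0;λ}} := ‖χ_λ‖_{L∞_{0,0;λ}} + [χ_λ]_{C^{0,α}_{0,0;λ}} ≤ c. -/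
open scoped BigOperators ENNReal

noncomputable section

lemma wt_zero_zero {X : Type*} [MetricSpace X] (Q : Set X) (lam : ℝ) (x : X) :
    wt Q 0 0 lam x = 1 := by
  unfold wt
  split_ifs <;> norm_num

lemma wt_sub_eq {X : Type*} [MetricSpace X] (Q : Set X) (a lam : ℝ) (x : X) :
    wt Q (0 - a) 0 lam x =
      if Metric.infDist x Q ≤ Real.sqrt lam then (lam + Metric.infDist x Q) ^ a
      else (Metric.infDist x Q) ^ a := by
  unfold wt
  have h1 : -(0 - a) - 0 = a := by ring
  have h2 : -(0 - a) + 0 = a := by ring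
  rw [h1, h2]
  split_ifs <;> norm_num

lemma wt_sub_le {X : Type*} [MetricSpace X] (Q : Set X) {a lam : ℝ}
    (ha : 0 ≤ a) (hlam : 0 < lam) (hlam1 : lam ≤ 1) {x : X}
    (hx : Metric.infDist x Q < 2 * Real.sqrt lam) :
    wt Q (0 - a) 0 lam x ≤ (2 * Real.sqrt lam) ^ a := by
  have hr : 0 ≤ Metric.infDist x Q := Metric.infDist_nonneg
  have hs : 0 < Real.sqrt lam := Real.sqrt_pos.mpr hlam
  have hls : lam ≤ Real.sqrt lam := by
    nlinarith [Real.sq_sqrt hlam.le, Real.sqrt_le_one.mpr hlam1, Real.sqrt_nonneg lam]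
  rw [wt_sub_eq]
  split_ifs with h
  · exact Real.rpow_le_rpow (by linarith) (by linarith) ha
  · exact Real.rpow_le_rpow hr hx.le ha

/-- Let `χ : ℝ → [0,1]` be `L`-Lipschitz with `χ ≡ 0` on `(−∞,1]` and
`χ ≡ 1` on `[2,∞)`, and let `α ∈ (0,1)`. Then there is `c > 0`, depending only on `L` and
`α`, such that for every `λ ∈ (0,1]` the function `χ_λ(x) = χ(r(x)/√λ)` satisfies
`‖χ_λ‖_{C^{0,α}_{0,0;λ}} = ‖χ_λ‖_{L∞_{0,0;λ}} + [χ_λ]_{C^{0,α}_{0,0;λ}} ≤ c`. -/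
theorem statement15 {X : Type*} [MetricSpace X] (Q : Set X) (hQ : Q.Nonempty)
    (L : NNReal) (χ : ℝ → ℝ) (hLip : LipschitzWith L χ)
    (hrange : ∀ s : ℝ, χ s ∈ Set.Icc (0 : ℝ) 1)
    (h0 : ∀ s : ℝ, s ≤ 1 → χ s = 0) (h1 : ∀ s : ℝ, 2 ≤ s → χ s = 1)
    (a : ℝ) (ha0 : 0 < a) (ha1 : a < 1) :
    ∃ c : ℝ, 0 < c ∧ ∀ lam : ℝ, 0 < lam → lam ≤ 1 →
      wnorm Q 0 0 lam (fun x => χ (Metric.infDist x Q / Real.sqrt lam)) +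
          wseminorm Q 0 0 lam a (fun x => χ (Metric.infDist x Q / Real.sqrt lam)) ≤
        ENNReal.ofReal c := by
  refine ⟨2 * L + 3, by positivity, fun lam hlam hlam1 => ?_⟩
  set s := Real.sqrt lam with hs_def
  have hs : 0 < s := Real.sqrt_pos.mpr hlam
  -- bound on the sup norm part
  have hwn : wnorm Q 0 0 lam (fun x => χ (Metric.infDist x Q / s)) ≤ ENNReal.ofReal 1 := by
    refine iSup_le fun x => ENNReal.ofReal_le_ofReal ?_
    rw [wt_zero_zero, one_mul, Real.norm_eq_abs]
    have h := hrange (Metric.infDist x Q / s)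
    rw [abs_le]
    exact ⟨by linarith [h.1], h.2⟩
  -- bound on the seminorm part
  have hws : wseminorm Q 0 0 lam a (fun x => χ (Metric.infDist x Q / s)) ≤
      ENNReal.ofReal (2 * L + 2) := by
    refine iSup_le ?_
    rintro ⟨⟨x, y⟩, hne, hdxy⟩
    refine ENNReal.ofReal_le_ofReal ?_
    dsimp only
    set rx := Metric.infDist x Q with hrx_def
    set ry := Metric.infDist y Q with hry_def
    set D := dist x y with hD_def
    have hD : 0 < D := dist_pos.mpr hne
    have hrx : 0 ≤ rx := Metric.infDist_nonneg
    have hry : 0 ≤ ry := Metric.infDist_nonneg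
    have hDa : 0 < D ^ a := Real.rpow_pos_of_pos hD a
    have hW0 : 0 ≤ min (wt Q (0 - a) 0 lam x) (wt Q (0 - a) 0 lam y) := by
      rw [wt_sub_eq, wt_sub_eq]
      refine le_min ?_ ?_ <;> split_ifs <;> positivity
    by_cases hc : 2 * s ≤ rx ∧ 2 * s ≤ ry
    · -- both far: difference is zero
      have hx2 : (2 : ℝ) ≤ rx / s := (le_div_iff₀ hs).mpr (by linarith [hc.1])
      have hy2 : (2 : ℝ) ≤ ry / s := (le_div_iff₀ hs).mpr (by linarith [hc.2])
      rw [h1 _ hx2, h1 _ hy2, sub_self, norm_zero, mul_zero, zero_div]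
      positivity
    · -- min distance to Q is < 2√λ
      have hm : min rx ry < 2 * s := by
        rcases not_and_or.mp hc with h | h
        · exact lt_of_le_of_lt (min_le_left _ _) (lt_of_not_ge h)
        · exact lt_of_le_of_lt (min_le_right _ _) (lt_of_not_ge h)
      have hW : min (wt Q (0 - a) 0 lam x) (wt Q (0 - a) 0 lam y) ≤ (2 * s) ^ a := by
        rcases min_lt_iff.mp hm with h | h
        · exact le_trans (min_le_left _ _) (wt_sub_le Q ha0.le hlam hlam1 h)
        · exact le_trans (min_le_right _ _) (wt_sub_le Q ha0.le hlam hlam1 h)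
      -- bound on the difference
      have hΔ1 : ‖χ (rx / s) - χ (ry / s)‖ ≤ 1 := by
        have h1' := hrange (rx / s)
        have h2' := hrange (ry / s)
        rw [Real.norm_eq_abs, abs_le]
        exact ⟨by linarith [h1'.1, h2'.2], by linarith [h1'.2, h2'.1]⟩
      have hrsub : |rx - ry| ≤ D := by
        rw [abs_sub_le_iff]
        constructor
        · have := Metric.infDist_le_infDist_add_dist (x := x) (y := y) (s := Q)
          simp only [← hrx_def, ← hry_def, ← hD_def] at this; linarith
        · have := Metric.infDist_le_infDist_add_dist (x := y) (y := x) (s := Q)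
          rw [dist_comm] at this
          simp only [← hrx_def, ← hry_def, ← hD_def] at this; linarith
      have hΔ2 : ‖χ (rx / s) - χ (ry / s)‖ ≤ L * (D / s) := by
        have := hLip.dist_le_mul (rx / s) (ry / s)
        rw [Real.dist_eq, Real.dist_eq, div_sub_div_same, abs_div,
          abs_of_pos hs] at this
        rw [Real.norm_eq_abs]
        calc |χ (rx / s) - χ (ry / s)| ≤ L * (|rx - ry| / s) := this
          _ ≤ L * (D / s) := by gcongr
      -- key: ‖Δ‖ ≤ (L+1) * (D/s)^a
      have hkey : ‖χ (rx / s) - χ (ry / s)‖ ≤ (L + 1) * (D / s) ^ a := by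
        set u := D / s with hu_def
        have hu : 0 < u := div_pos hD hs
        by_cases hu1 : 1 ≤ u
        · have : (1 : ℝ) ≤ u ^ a := Real.one_le_rpow hu1 ha0.le
          calc ‖χ (rx / s) - χ (ry / s)‖ ≤ 1 := hΔ1
            _ ≤ u ^ a := this
            _ ≤ (L + 1) * u ^ a := le_mul_of_one_le_left (by positivity)
                (by linarith [L.coe_nonneg])
        · push_neg at hu1
          have hua : u ≤ u ^ a := by
            calc u = u ^ (1 : ℝ) := (Real.rpow_one u).symm
              _ ≤ u ^ a := Real.rpow_le_rpow_of_exponent_ge hu hu1.le ha1.le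
          calc ‖χ (rx / s) - χ (ry / s)‖ ≤ L * u := hΔ2
            _ ≤ L * u ^ a := mul_le_mul_of_nonneg_left hua L.coe_nonneg
            _ ≤ (L + 1) * u ^ a := mul_le_mul_of_nonneg_right
                (by linarith [L.coe_nonneg]) (by positivity)
      -- combine
      have hprod : min (wt Q (0 - a) 0 lam x) (wt Q (0 - a) 0 lam y) *
          ‖χ (rx / s) - χ (ry / s)‖ ≤ (2 * s) ^ a * ((L + 1) * (D / s) ^ a) := by
        exact mul_le_mul hW hkey (norm_nonneg _) (by positivity)
      have heq : (2 * s) ^ a * ((L + 1) * (D / s) ^ a) / D ^ a = 2 ^ a * (L + 1) := by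
        rw [Real.mul_rpow (by norm_num) hs.le, Real.div_rpow hD.le hs.le]
        have hsa : (0:ℝ) < s ^ a := Real.rpow_pos_of_pos hs a
        field_simp
      have h2a : (2 : ℝ) ^ a ≤ 2 := by
        calc (2 : ℝ) ^ a ≤ 2 ^ (1 : ℝ) :=
              Real.rpow_le_rpow_of_exponent_le (by norm_num) ha1.le
          _ = 2 := Real.rpow_one 2
      calc min (wt Q (0 - a) 0 lam x) (wt Q (0 - a) 0 lam y) *
            ‖χ (rx / s) - χ (ry / s)‖ / D ^ a
          ≤ (2 * s) ^ a * ((L + 1) * (D / s) ^ a) / D ^ a :=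
            by gcongr
        _ = 2 ^ a * (L + 1) := heq
        _ ≤ 2 * (L + 1) := mul_le_mul_of_nonneg_right h2a (by positivity)
        _ = 2 * L + 2 := by ring
  calc wnorm Q 0 0 lam (fun x => χ (Metric.infDist x Q / s)) +
        wseminorm Q 0 0 lam a (fun x => χ (Metric.infDist x Q / s))
      ≤ ENNReal.ofReal 1 + ENNReal.ofReal (2 * L + 2) := add_le_add hwn hws
    _ = ENNReal.ofReal (1 + (2 * L + 2)) := (ENNReal.ofReal_add (by norm_num) (by positivity)).symm
    _ = ENNReal.ofReal (2 * L + 3) := by norm_num; ring_nf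
end
end
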